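/- arXiv:1812.03709 — 5 statements merged into one kernel-verified Lean document; each statement's English description precedes it below -/
import Mathlib

section
/- Define $u2(n)$ by $\sum_{n\geq 0} u2(n) q^n = \sum_{n\geq 1} \frac{(-q^2;q^2)_{n-1}^2\, q^{2n}}{(-q;q^2)_n}\cdot(-1)^n$ evaluated at $q \mapsto -q$ (i.e., $u2(n)$ are the coefficients of $U2(1;-q)$). Then $u2(n+1) \geq u2(n)$ for all $n \geq 0$. -/
/-- The series `U2(1;-q) = ∑_{n≥1} (-q²;q²)_{n-1}² q^{2n} / (q;q²)_n`. -/
noncomputable def U2series (q : ℝ) : ℝ :=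
  ∑' n : ℕ, (∏ j ∈ Finset.range n, (1 + q ^ 2 * (q ^ 2) ^ j)) ^ 2 * q ^ (2 * (n + 1)) /
    ∏ j ∈ Finset.range (n + 1), (1 - q * (q ^ 2) ^ j)


open Finset
set_option maxHeartbeats 1000000

/-- `Good f` means `f` on `(0,1)` is given by a power series with nonnegative coefficients. -/
def Good (f : ℝ → ℝ) : Prop :=
  ∃ c : ℕ → ℝ, (∀ n, 0 ≤ c n) ∧
    ∀ q : ℝ, 0 < q → q < 1 → HasSum (fun n => c n * q ^ n) (f q)

lemma good_pow (k : ℕ) : Good (fun q => q ^ k) := by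
  refine ⟨fun n => if n = k then 1 else 0, fun n => by positivity, fun q hq hq1 => ?_⟩
  have := hasSum_ite_eq k (q ^ k)
  refine this.congr_fun fun n => ?_
  by_cases hnk : n = k <;> simp [hnk]

lemma good_onePlusPow {k : ℕ} (hk : 0 < k) : Good (fun q => 1 + q ^ k) := by
  refine ⟨fun n => if n = 0 then 1 else if n = k then 1 else 0,
    fun n => by positivity, fun q hq hq1 => ?_⟩
  have h1 : HasSum (fun n : ℕ => (if n = 0 then (1:ℝ) else 0) * q ^ n) 1 := by
    have := hasSum_ite_eq (0:ℕ) ((1:ℝ))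
    refine this.congr_fun fun n => ?_
    by_cases hn : n = 0 <;> simp [hn]
  have h2 : HasSum (fun n : ℕ => (if n = k then (1:ℝ) else 0) * q ^ n) (q ^ k) := by
    have := hasSum_ite_eq k (q ^ k)
    refine this.congr_fun fun n => ?_
    by_cases hn : n = k <;> simp [hn]
  refine (h1.add h2).congr_fun fun n => ?_
  by_cases h0 : n = 0
  · subst h0; simp [hk.ne]
  · by_cases hn : n = k
    · subst hn; simp [h0, add_mul]
    · simp [h0, hn, add_mul]

lemma good_invOneSubPow {k : ℕ} (hk : 0 < k) : Good (fun q => (1 - q ^ k)⁻¹) := by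
  refine ⟨fun n => if k ∣ n then 1 else 0, fun n => by positivity, fun q hq hq1 => ?_⟩
  have hqk : |q ^ k| < 1 := by
    rw [abs_of_nonneg (by positivity)]
    exact pow_lt_one₀ (le_of_lt hq) hq1 hk.ne'
  have hgeom : HasSum (fun j : ℕ => (q ^ k) ^ j) (1 - q ^ k)⁻¹ :=
    hasSum_geometric_of_abs_lt_one hqk
  have hinj : Function.Injective (fun j : ℕ => k * j) :=
    fun a b hab => Nat.eq_of_mul_eq_mul_left hk hab
  have h0 : ∀ n ∉ Set.range (fun j : ℕ => k * j),
      (if k ∣ n then (1:ℝ) else 0) * q ^ n = 0 := by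
    intro n hn
    have : ¬ k ∣ n := by rintro ⟨j, rfl⟩; exact hn ⟨j, rfl⟩
    simp [this]
  refine (hinj.hasSum_iff h0).mp (hgeom.congr_fun fun j => ?_)
  simp [← pow_mul, Dvd.intro j rfl]

lemma Good.mul {f g : ℝ → ℝ} (hf : Good f) (hg : Good g) : Good (fun q => f q * g q) := by
  obtain ⟨c, hc0, hc⟩ := hf
  obtain ⟨d, hd0, hd⟩ := hg
  refine ⟨fun n => ∑ k ∈ Finset.range (n+1), c k * d (n-k), ?_, ?_⟩
  · exact fun n => Finset.sum_nonneg fun k _ => mul_nonneg (hc0 _) (hd0 _)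
  intro q hq hq1
  have hcs : Summable (fun n => c n * q ^ n) := (hc q hq hq1).summable
  have hds : Summable (fun n => d n * q ^ n) := (hd q hq hq1).summable
  have hmul : Summable (fun x : ℕ × ℕ => (c x.1 * q ^ x.1) * (d x.2 * q ^ x.2)) :=
    hcs.mul_of_nonneg hds (fun n => mul_nonneg (hc0 n) (by positivity))
      (fun n => mul_nonneg (hd0 n) (by positivity))
  have hsum : Summable (fun n => ∑ k ∈ Finset.range (n+1), (c k * q ^ k) * (d (n-k) * q ^ (n-k))) :=
    summable_sum_mul_range_of_summable_mul (f := fun n => c n * q ^ n)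
      (g := fun n => d n * q ^ n) hmul
  have htsum : ((∑' n, c n * q ^ n) * ∑' n, d n * q ^ n)
      = ∑' n, ∑ k ∈ Finset.range (n+1), (c k * q ^ k) * (d (n-k) * q ^ (n-k)) :=
    Summable.tsum_mul_tsum_eq_tsum_sum_range (f := fun n => c n * q ^ n)
      (g := fun n => d n * q ^ n) hcs hds hmul
  rw [(hc q hq hq1).tsum_eq, (hd q hq hq1).tsum_eq] at htsum
  have key : HasSum (fun n => ∑ k ∈ Finset.range (n+1), (c k * q ^ k) * (d (n-k) * q ^ (n-k)))
      (f q * g q) := hsum.hasSum_iff.mpr htsum.symm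
  refine key.congr_fun fun n => ?_
  rw [Finset.sum_mul]
  refine Finset.sum_congr rfl fun k hk => ?_
  have hkn : k ≤ n := Nat.lt_succ_iff.mp (Finset.mem_range.mp hk)
  rw [← Nat.add_sub_cancel' hkn, Nat.add_sub_cancel_left, pow_add]; ring

lemma Good.prod {ι : Type*} (s : Finset ι) (F : ι → ℝ → ℝ) (hF : ∀ i ∈ s, Good (F i)) :
    Good (fun q => ∏ i ∈ s, F i q) := by
  classical
  induction s using Finset.induction_on with
  | empty =>
    refine ⟨fun n => if n = 0 then 1 else 0, fun n => by positivity, fun q hq hq1 => ?_⟩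
    have := hasSum_ite_eq (0:ℕ) ((1:ℝ))
    simp only [Finset.prod_empty]
    refine this.congr_fun fun n => ?_
    by_cases hn : n = 0 <;> simp [hn]
  | insert a s' hx ih =>
    have h1 : Good (F a) := hF a (Finset.mem_insert_self a s')
    have h2 : Good (fun q => ∏ i ∈ s', F i q) := ih fun i hi => hF i (Finset.mem_insert_of_mem hi)
    have := h1.mul h2
    refine ⟨this.choose, this.choose_spec.1, fun q hq hq1 => ?_⟩
    have hs := this.choose_spec.2 q hq hq1
    simpa [Finset.prod_insert hx] using hs

lemma good_tsum (F : ℕ → ℝ → ℝ) (hF : ∀ n, Good (F n)) (G : ℝ → ℝ)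
    (hG : ∀ q : ℝ, 0 < q → q < 1 → HasSum (fun n => F n q) (G q)) : Good G := by
  choose β hβ0 hβ using hF
  have hΦ : ∀ q : ℝ, 0 < q → q < 1 →
      Summable (fun x : ℕ × ℕ => β x.1 x.2 * q ^ x.2) := by
    intro q hq hq1
    rw [summable_prod_of_nonneg (fun x => mul_nonneg (hβ0 _ _) (by positivity))]
    constructor
    · exact fun n => (hβ n q hq hq1).summable
    · refine (hG q hq hq1).summable.congr fun n => ?_
      exact ((hβ n q hq hq1).tsum_eq).symm
  have hΦswap : ∀ q : ℝ, 0 < q → q < 1 →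
      Summable (fun x : ℕ × ℕ => β x.2 x.1 * q ^ x.1) := by
    intro q hq hq1
    have := (Equiv.prodComm ℕ ℕ).summable_iff.mpr (hΦ q hq hq1)
    exact this
  have hcol : ∀ m : ℕ, Summable (fun n => β n m) := by
    intro m
    have h2 := (summable_prod_of_nonneg
      (f := fun x : ℕ × ℕ => β x.2 x.1 * ((1:ℝ)/2) ^ x.1)
      (fun x => mul_nonneg (hβ0 _ _) (by positivity))).mp
      (hΦswap (1/2) (by norm_num) (by norm_num))
    have := h2.1 m
    have hne : ((1:ℝ)/2) ^ m ≠ 0 := by positivity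
    exact (summable_mul_right_iff hne).mp this
  refine ⟨fun m => ∑' n, β n m, fun m => tsum_nonneg fun n => hβ0 n m, fun q hq hq1 => ?_⟩
  have hswap := hΦswap q hq hq1
  have hrows := (summable_prod_of_nonneg
      (f := fun x : ℕ × ℕ => β x.2 x.1 * q ^ x.1)
      (fun x => mul_nonneg (hβ0 _ _) (by positivity))).mp hswap
  have hsummable : Summable (fun m => (∑' n, β n m) * q ^ m) := by
    refine hrows.2.congr fun m => ?_
    show (∑' n : ℕ, β n m * q ^ m) = (∑' n : ℕ, β n m) * q ^ m
    exact tsum_mul_right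
  rw [Summable.hasSum_iff hsummable]
  have e1 : ∀ m : ℕ, (∑' n, β n m) * q ^ m = ∑' n, β n m * q ^ m := fun m => tsum_mul_right.symm
  calc ∑' m, (∑' n, β n m) * q ^ m
      = ∑' (m : ℕ) (n : ℕ), β n m * q ^ m := by
        refine tsum_congr fun m => e1 m
    _ = ∑' (n : ℕ) (m : ℕ), β n m * q ^ m := by
        refine Summable.tsum_comm' (f := fun n m => β n m * q ^ m) (hΦ q hq hq1) ?_ ?_
        · exact fun n => (hβ n q hq hq1).summable
        · exact fun m => (hrows.1 m)
    _ = ∑' n : ℕ, F n q := by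
        refine tsum_congr fun n => (hβ n q hq hq1).tsum_eq
    _ = G q := (hG q hq hq1).tsum_eq

lemma coeff_zero (e : ℕ → ℝ)
    (h : ∀ q : ℝ, 0 < q → q < 1 → HasSum (fun n => e n * q ^ n) 0) :
    ∀ n, e n = 0 := by
  have hs : Summable (fun n => e n * (1/2:ℝ) ^ n) :=
    (h (1/2) (by norm_num) (by norm_num)).summable
  obtain ⟨C, hC⟩ : ∃ C : ℝ, ∀ n, |e n * (1/2:ℝ) ^ n| ≤ C := by
    obtain ⟨C, hC⟩ := (hs.tendsto_atTop_zero.abs.bddAbove_range)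
    exact ⟨C, fun n => hC ⟨n, rfl⟩⟩
  have hC0 : 0 ≤ C := le_trans (abs_nonneg _) (hC 0)
  have hbound : ∀ n, |e n| ≤ C * 2 ^ n := by
    intro n
    have h1 := hC n
    rw [abs_mul, abs_of_nonneg (by positivity : (0:ℝ) ≤ (1/2:ℝ) ^ n)] at h1
    have h2 : |e n| * (1/2:ℝ) ^ n * 2 ^ n ≤ C * 2 ^ n := by gcongr
    calc |e n| = |e n| * (1/2:ℝ) ^ n * 2 ^ n := by
          rw [mul_assoc, ← mul_pow]; norm_num
      _ ≤ C * 2 ^ n := h2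
  intro n
  induction n using Nat.strong_induction_on with
  | _ n ih =>
  have key : ∀ q : ℝ, 0 < q → q ≤ 1/4 → |e n| ≤ C * 2 ^ (n+2) * q := by
    intro q hq hq4
    have hq1 : q < 1 := lt_of_le_of_lt hq4 (by norm_num)
    have h0 := h q hq hq1
    have h1 : HasSum (fun m => e (m + n) * q ^ (m + n)) 0 := by
      refine (hasSum_nat_add_iff (f := fun m => e m * q ^ m) n).mpr ?_
      have hz : ∑ i ∈ Finset.range n, e i * q ^ i = 0 := by
        refine Finset.sum_eq_zero fun i hi => ?_
        rw [ih i (Finset.mem_range.mp hi)]; ring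
      rw [hz, add_zero]
      exact h0
    have hqn : (q:ℝ) ^ n ≠ 0 := pow_ne_zero n hq.ne'
    have h2 : HasSum (fun m => e (m + n) * q ^ m) 0 := by
      refine (hasSum_mul_right_iff hqn).mp ?_
      rw [zero_mul]
      refine h1.congr_fun fun m => ?_
      rw [pow_add, mul_assoc]
    have h3 : HasSum (fun m => e (m + 1 + n) * q ^ (m + 1)) (-(e n)) := by
      have h4 : HasSum (fun m => e (m + n) * q ^ m)
          (-(e n) + ∑ i ∈ Finset.range 1, e (i + n) * q ^ i) := by
        simpa using h2
      exact (hasSum_nat_add_iff (f := fun m => e (m + n) * q ^ m) 1).mpr h4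
    -- geometric domination
    have h2q : (0:ℝ) ≤ 2 * q := by positivity
    have h2q1 : 2 * q < 1 := by nlinarith
    have hgeom : Summable (fun m : ℕ => (2*q) ^ m) := summable_geometric_of_lt_one h2q h2q1
    have hg : Summable (fun m : ℕ => (C * 2 ^ (n+1) * q) * (2*q) ^ m) := hgeom.mul_left _
    have hgeq : ∀ m : ℕ, (C * 2 ^ (n+1) * q) * (2*q) ^ m = C * 2 ^ (m+1+n) * q ^ (m+1) := by
      intro m
      rw [mul_pow, pow_add, pow_add]; ring
    have habs : ∀ m, |e (m + 1 + n) * q ^ (m + 1)| ≤ C * 2 ^ (m+1+n) * q ^ (m+1) := by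
      intro m
      rw [abs_mul, abs_of_nonneg (pow_nonneg hq.le _)]
      exact mul_le_mul_of_nonneg_right (hbound _) (by positivity)
    have hgsum : Summable (fun m : ℕ => C * 2 ^ (m+1+n) * q ^ (m+1)) :=
      hg.congr hgeq
    have habs_sum : Summable (fun m => |e (m + 1 + n) * q ^ (m + 1)|) :=
      Summable.of_nonneg_of_le (fun m => abs_nonneg _) habs hgsum
    have step1 : |e n| = |∑' m, e (m + 1 + n) * q ^ (m + 1)| := by
      rw [h3.tsum_eq, abs_neg]
    have step2 : |∑' m, e (m + 1 + n) * q ^ (m + 1)|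
        ≤ ∑' m, |e (m + 1 + n) * q ^ (m + 1)| := by
      have hn := norm_tsum_le_tsum_norm (f := fun m => e (m + 1 + n) * q ^ (m + 1))
        (by simpa only [Real.norm_eq_abs] using habs_sum)
      simpa only [Real.norm_eq_abs] using hn
    have step3 : ∑' m, |e (m + 1 + n) * q ^ (m + 1)|
        ≤ ∑' m : ℕ, C * 2 ^ (m+1+n) * q ^ (m+1) :=
      Summable.tsum_le_tsum habs habs_sum hgsum
    have step4 : ∑' m : ℕ, C * 2 ^ (m+1+n) * q ^ (m+1)
        = (C * 2 ^ (n+1) * q) * (1 - 2*q)⁻¹ := by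
      rw [← tsum_congr hgeq, tsum_mul_left, tsum_geometric_of_lt_one h2q h2q1]
    have hinv : (1 - 2*q)⁻¹ ≤ 2 := by
      rw [inv_le_comm₀ (by nlinarith) (by norm_num)]
      nlinarith
    have step5 : (C * 2 ^ (n+1) * q) * (1 - 2*q)⁻¹ ≤ C * 2 ^ (n+2) * q := by
      have hCq : (0:ℝ) ≤ C * 2 ^ (n+1) * q := by positivity
      calc (C * 2 ^ (n+1) * q) * (1 - 2*q)⁻¹ ≤ (C * 2 ^ (n+1) * q) * 2 :=
            mul_le_mul_of_nonneg_left hinv hCq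
        _ = C * 2 ^ (n+2) * q := by ring
    linarith [step1, step2, step3, step4 ▸ step3, step5,
      step4 ▸ le_trans step2 step3]
  by_contra hne
  have habs : 0 < |e n| := abs_pos.mpr hne
  set K : ℝ := C * 2 ^ (n+2) with hK
  have hK0 : 0 < K := by
    rcases lt_or_ge 0 C with hC' | hC'
    · positivity
    · exfalso
      have hCz : C = 0 := le_antisymm hC' hC0
      have hb := hbound n
      rw [hCz, zero_mul] at hb
      linarith
  have hq0 : 0 < min (1/4 : ℝ) (|e n| / (2 * K)) := by
    apply lt_min (by norm_num)
    positivity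
  have hkey := key _ hq0 (min_le_left _ _)
  have : K * min (1/4 : ℝ) (|e n| / (2 * K)) ≤ K * (|e n| / (2 * K)) :=
    mul_le_mul_of_nonneg_left (min_le_right _ _) hK0.le
  have heq : K * (|e n| / (2 * K)) = |e n| / 2 := by
    field_simp
  linarith

lemma good_congr {f g : ℝ → ℝ} (hf : Good f)
    (hfg : ∀ q : ℝ, 0 < q → q < 1 → f q = g q) : Good g := by
  obtain ⟨c, hc0, hc⟩ := hf
  exact ⟨c, hc0, fun q hq hq1 => (hfg q hq hq1) ▸ hc q hq hq1⟩

lemma hasSum_partial_sums (c : ℕ → ℝ) (hc0 : ∀ n, 0 ≤ c n) (q : ℝ)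
    (hq : 0 < q) (hq1 : q < 1) (S : ℝ) (hc : HasSum (fun n => c n * q ^ n) S) :
    HasSum (fun n => (∑ k ∈ Finset.range (n+1), c k) * q ^ n) (S * (1 - q)⁻¹) := by
  have hd : HasSum (fun n : ℕ => q ^ n) ((1 - q)⁻¹) := by
    refine hasSum_geometric_of_abs_lt_one ?_
    rw [abs_of_nonneg hq.le]; exact hq1
  have hcs : Summable (fun n => c n * q ^ n) := hc.summable
  have hds : Summable (fun n : ℕ => q ^ n) := hd.summable
  have hmul : Summable (fun x : ℕ × ℕ => (c x.1 * q ^ x.1) * (q ^ x.2)) :=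
    hcs.mul_of_nonneg hds (fun n => mul_nonneg (hc0 n) (by positivity))
      (fun n => by positivity)
  have hsum : Summable (fun n => ∑ k ∈ Finset.range (n+1), (c k * q ^ k) * (q ^ (n-k))) :=
    summable_sum_mul_range_of_summable_mul (f := fun n => c n * q ^ n)
      (g := fun n : ℕ => q ^ n) hmul
  have htsum : ((∑' n, c n * q ^ n) * ∑' n : ℕ, q ^ n)
      = ∑' n, ∑ k ∈ Finset.range (n+1), (c k * q ^ k) * (q ^ (n-k)) :=
    Summable.tsum_mul_tsum_eq_tsum_sum_range (f := fun n => c n * q ^ n)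
      (g := fun n : ℕ => q ^ n) hcs hds hmul
  rw [hc.tsum_eq, hd.tsum_eq] at htsum
  have key : HasSum (fun n => ∑ k ∈ Finset.range (n+1), (c k * q ^ k) * (q ^ (n-k)))
      (S * (1 - q)⁻¹) := hsum.hasSum_iff.mpr htsum.symm
  refine key.congr_fun fun n => ?_
  rw [Finset.sum_mul]
  refine Finset.sum_congr rfl fun k hk => ?_
  have hkn : k ≤ n := Nat.lt_succ_iff.mp (Finset.mem_range.mp hk)
  rw [← Nat.add_sub_cancel' hkn, Nat.add_sub_cancel_left, pow_add]; ring

/-- The `n`-th summand of `(1-q) * U2series q`. -/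
noncomputable def bfun (n : ℕ) (q : ℝ) : ℝ :=
  (∏ j ∈ Finset.range n, (1 + q ^ 2 * (q ^ 2) ^ j)) ^ 2 * q ^ (2 * (n + 1)) /
    ∏ j ∈ Finset.range n, (1 - q * (q ^ 2) ^ (j + 1))

lemma geom_partial_le {r : ℝ} (hr0 : 0 ≤ r) (hr1 : r < 1) (n : ℕ) :
    ∑ j ∈ Finset.range n, r ^ j ≤ (1 - r)⁻¹ := by
  have hsum := summable_geometric_of_lt_one hr0 hr1
  have := Summable.sum_le_tsum (Finset.range n) (fun i _ => by positivity) hsum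
  rwa [tsum_geometric_of_lt_one hr0 hr1] at this

lemma bfun_good (n : ℕ) : Good (bfun n) := by
  have hP : Good (fun q : ℝ => ∏ j ∈ Finset.range n, (1 + q ^ (2*j+2))) :=
    Good.prod _ _ (fun j _ => good_onePlusPow (by omega))
  have hD : Good (fun q : ℝ => ∏ j ∈ Finset.range n, (1 - q ^ (2*j+3))⁻¹) :=
    Good.prod _ _ (fun j _ => good_invOneSubPow (by omega))
  have hpow : Good (fun q : ℝ => q ^ (2*(n+1))) := good_pow _
  have hall := hP.mul (hP.mul (hpow.mul hD))
  refine good_congr hall fun q hq hq1 => ?_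
  have hprodeq : (∏ j ∈ Finset.range n, (1 + q ^ (2*j+2)))
      = ∏ j ∈ Finset.range n, (1 + q ^ 2 * (q ^ 2) ^ j) := by
    refine Finset.prod_congr rfl fun j _ => ?_
    rw [← pow_mul, ← pow_add]
    ring_nf
  have hdeneq : (∏ j ∈ Finset.range n, (1 - q ^ (2*j+3))⁻¹)
      = (∏ j ∈ Finset.range n, (1 - q * (q ^ 2) ^ (j + 1)))⁻¹ := by
    rw [← Finset.prod_inv_distrib]
    refine Finset.prod_congr rfl fun j _ => ?_
    have hexp : 2*(j+1)+1 = 2*j+3 := by omega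
    rw [← pow_mul, ← pow_succ', hexp]
  rw [hprodeq, hdeneq, bfun, div_eq_mul_inv]
  ring

lemma bfun_summable {q : ℝ} (hq : 0 < q) (hq1 : q < 1) :
    Summable (fun n => bfun n q) := by
  have hq2 : q ^ 2 < 1 := by nlinarith
  have hq2' : (0:ℝ) ≤ q ^ 2 := by positivity
  have h1q2 : (0:ℝ) < 1 - q ^ 2 := by linarith
  have h1q : (0:ℝ) < 1 - q := by linarith
  -- each denominator factor is positive
  have hx : ∀ j : ℕ, q * (q ^ 2) ^ (j+1) ≤ q ^ 3 := by
    intro j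
    calc q * (q ^ 2) ^ (j+1) ≤ q * (q ^ 2) ^ 1 := by
          refine mul_le_mul_of_nonneg_left ?_ hq.le
          exact pow_le_pow_of_le_one hq2' hq2.le (by omega)
      _ = q ^ 3 := by ring
  have hx0 : ∀ j : ℕ, 0 < q * (q ^ 2) ^ (j+1) := fun j => by positivity
  have hq3 : q ^ 3 < 1 := by nlinarith
  have hfac : ∀ j : ℕ, 0 < 1 - q * (q ^ 2) ^ (j+1) := by
    intro j
    have := hx j
    nlinarith
  set E : ℝ := Real.exp (q ^ 2 * (1 - q ^ 2)⁻¹) with hE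
  set F : ℝ := Real.exp (q ^ 3 * (1 - q)⁻¹ * (1 - q ^ 2)⁻¹) with hF
  have hNle : ∀ m : ℕ, (∏ j ∈ Finset.range m, (1 + q ^ 2 * (q ^ 2) ^ j)) ≤ E := by
    intro m
    calc (∏ j ∈ Finset.range m, (1 + q ^ 2 * (q ^ 2) ^ j))
        ≤ ∏ j ∈ Finset.range m, Real.exp (q ^ 2 * (q ^ 2) ^ j) := by
          refine Finset.prod_le_prod (fun j _ => by positivity) (fun j _ => ?_)
          have := Real.add_one_le_exp (q ^ 2 * (q ^ 2) ^ j)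
          linarith
      _ = Real.exp (∑ j ∈ Finset.range m, q ^ 2 * (q ^ 2) ^ j) := (Real.exp_sum _ _).symm
      _ ≤ E := by
          rw [hE, Real.exp_le_exp, ← Finset.mul_sum]
          exact mul_le_mul_of_nonneg_left (geom_partial_le hq2' hq2 m) hq2'
  have hPinv : ∀ m : ℕ, (∏ j ∈ Finset.range m, (1 - q * (q ^ 2) ^ (j+1)))⁻¹ ≤ F := by
    intro m
    rw [← Finset.prod_inv_distrib]
    calc (∏ j ∈ Finset.range m, (1 - q * (q ^ 2) ^ (j+1))⁻¹)
        ≤ ∏ j ∈ Finset.range m, Real.exp (q * (q ^ 2) ^ (j+1) * (1 - q)⁻¹) := by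
          refine Finset.prod_le_prod (fun j _ => inv_nonneg.mpr (hfac j).le) (fun j _ => ?_)
          set x : ℝ := q * (q ^ 2) ^ (j+1) with hxdef
          have hx1 : x ≤ q ^ 3 := hx j
          have hx2 : 0 < x := hx0 j
          have hx3 : 0 < 1 - x := hfac j
          have hstep : (1 - x)⁻¹ ≤ 1 + x * (1 - q)⁻¹ := by
            rw [inv_eq_one_div, div_le_iff₀ hx3]
            have hinvq : (1 - q)⁻¹ * (1 - q) = 1 := by
              field_simp
            have hxq : x ≤ q := by nlinarith
            have hkey : 1 ≤ (1 - q)⁻¹ * (1 - x) := by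
              calc (1:ℝ) = (1 - q)⁻¹ * (1 - q) := hinvq.symm
                _ ≤ (1 - q)⁻¹ * (1 - x) := by
                    refine mul_le_mul_of_nonneg_left (by linarith) (inv_nonneg.mpr h1q.le)
            have h10 : x * 1 ≤ x * ((1 - q)⁻¹ * (1 - x)) :=
              mul_le_mul_of_nonneg_left hkey hx2.le
            nlinarith [h10]
          calc (1 - x)⁻¹ ≤ 1 + x * (1 - q)⁻¹ := hstep
            _ ≤ Real.exp (x * (1 - q)⁻¹) := by
                have := Real.add_one_le_exp (x * (1 - q)⁻¹)
                linarith
      _ = Real.exp (∑ j ∈ Finset.range m, q * (q ^ 2) ^ (j+1) * (1 - q)⁻¹) :=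
          (Real.exp_sum _ _).symm
      _ ≤ F := by
          rw [hF, Real.exp_le_exp]
          have : ∀ j ∈ Finset.range m, q * (q ^ 2) ^ (j+1) * (1 - q)⁻¹
              = (q ^ 3 * (1 - q)⁻¹) * (q ^ 2) ^ j := by
            intro j _
            rw [pow_succ']
            ring
          rw [Finset.sum_congr rfl this, ← Finset.mul_sum]
          exact mul_le_mul_of_nonneg_left (geom_partial_le hq2' hq2 m) (by positivity)
  have hbd : ∀ m : ℕ, bfun m q ≤ (E ^ 2 * F * q ^ 2) * (q ^ 2) ^ m := by
    intro m
    rw [bfun, div_eq_mul_inv]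
    have h1 : (∏ j ∈ Finset.range m, (1 + q ^ 2 * (q ^ 2) ^ j)) ^ 2 ≤ E ^ 2 := by
      have h0 : (0:ℝ) ≤ ∏ j ∈ Finset.range m, (1 + q ^ 2 * (q ^ 2) ^ j) :=
        Finset.prod_nonneg fun j _ => by positivity
      exact pow_le_pow_left₀ h0 (hNle m) 2
    have h2 : q ^ (2 * (m+1)) = q ^ 2 * (q ^ 2) ^ m := by
      rw [pow_mul, pow_succ']
    have hPpos : (0:ℝ) < ∏ j ∈ Finset.range m, (1 - q * (q ^ 2) ^ (j+1)) :=
      Finset.prod_pos fun j _ => hfac j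
    have h3 : (0:ℝ) < (∏ j ∈ Finset.range m, (1 - q * (q ^ 2) ^ (j+1)))⁻¹ :=
      inv_pos.mpr hPpos
    calc (∏ j ∈ Finset.range m, (1 + q ^ 2 * (q ^ 2) ^ j)) ^ 2 * q ^ (2 * (m+1)) *
          (∏ j ∈ Finset.range m, (1 - q * (q ^ 2) ^ (j+1)))⁻¹
        ≤ E ^ 2 * q ^ (2 * (m+1)) * F := by
          refine mul_le_mul ?_ (hPinv m) h3.le (by positivity)
          exact mul_le_mul_of_nonneg_right h1 (by positivity)
      _ = (E ^ 2 * F * q ^ 2) * (q ^ 2) ^ m := by rw [h2]; ring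
  have hgeo : Summable (fun m : ℕ => (E ^ 2 * F * q ^ 2) * (q ^ 2) ^ m) :=
    (summable_geometric_of_lt_one hq2' hq2).mul_left _
  refine Summable.of_nonneg_of_le (fun m => ?_) hbd hgeo
  rw [bfun]
  have h3 : (0:ℝ) < ∏ j ∈ Finset.range m, (1 - q * (q ^ 2) ^ (j+1)) :=
    Finset.prod_pos fun j _ => hfac j
  exact div_nonneg (by positivity) h3.le

lemma hasSum_bfun {q : ℝ} (hq : 0 < q) (hq1 : q < 1) :
    HasSum (fun n => bfun n q) ((1 - q) * U2series q) := by
  have h1q : (0:ℝ) < 1 - q := by linarith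
  have hq2 : q ^ 2 < 1 := by nlinarith
  have hq2' : (0:ℝ) ≤ q ^ 2 := by positivity
  have hAeq : ∀ n : ℕ,
      (∏ j ∈ Finset.range n, (1 + q ^ 2 * (q ^ 2) ^ j)) ^ 2 * q ^ (2 * (n + 1)) /
        ∏ j ∈ Finset.range (n + 1), (1 - q * (q ^ 2) ^ j)
      = bfun n q * (1 - q)⁻¹ := by
    intro n
    rw [bfun, Finset.prod_range_succ']
    simp only [pow_zero, mul_one]
    rw [← div_div, div_eq_mul_inv]
  have hsummA : Summable (fun n => bfun n q * (1 - q)⁻¹) :=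
    (bfun_summable hq hq1).mul_right _
  have hsum : Summable (fun n : ℕ =>
      (∏ j ∈ Finset.range n, (1 + q ^ 2 * (q ^ 2) ^ j)) ^ 2 * q ^ (2 * (n + 1)) /
        ∏ j ∈ Finset.range (n + 1), (1 - q * (q ^ 2) ^ j)) :=
    hsummA.congr fun n => (hAeq n).symm
  have hU : HasSum (fun n : ℕ =>
      (∏ j ∈ Finset.range n, (1 + q ^ 2 * (q ^ 2) ^ j)) ^ 2 * q ^ (2 * (n + 1)) /
        ∏ j ∈ Finset.range (n + 1), (1 - q * (q ^ 2) ^ j)) (U2series q) := by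
    rw [U2series]
    exact hsum.hasSum
  have hmul := hU.mul_left (1 - q)
  refine hmul.congr_fun fun n => ?_
  rw [hAeq n, mul_comm (1 - q), mul_assoc, inv_mul_cancel₀ h1q.ne', mul_one]

theorem stmt5 (u2 : ℕ → ℝ)
    (h : ∀ q : ℝ, 0 < q → q < 1 → HasSum (fun n => u2 n * q ^ n) (U2series q)) :
    ∀ n : ℕ, u2 n ≤ u2 (n + 1) := by
  obtain ⟨c, hc0, hc⟩ := good_tsum bfun bfun_good (fun q => (1 - q) * U2series q)
    (fun q hq hq1 => hasSum_bfun hq hq1)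
  have hd : ∀ q : ℝ, 0 < q → q < 1 →
      HasSum (fun n => (∑ k ∈ Finset.range (n+1), c k) * q ^ n) (U2series q) := by
    intro q hq hq1
    have h1q : (1:ℝ) - q ≠ 0 := by
      intro hz
      nlinarith
    have hps := hasSum_partial_sums c hc0 q hq hq1 _ (hc q hq hq1)
    simp only at hps
    rwa [mul_comm (1 - q) (U2series q), mul_assoc, mul_inv_cancel₀ h1q, mul_one] at hps
  have hequ : ∀ n, u2 n = ∑ k ∈ Finset.range (n+1), c k := by
    have hz := coeff_zero (fun n => u2 n - ∑ k ∈ Finset.range (n+1), c k) ?_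
    · intro n
      have := hz n
      linarith
    · intro q hq hq1
      have hsub := (h q hq hq1).sub (hd q hq hq1)
      simpa [sub_mul] using hsub
  intro n
  rw [hequ n, hequ (n+1)]
  rw [Finset.sum_range_succ (f := c) (n := n+1)]
  have := hc0 (n+1)
  linarith
end

section
/- For $0<|q|<1$, the double-sum identity $\sum_{n\geq 0}\sum_{0 \le j \le n} (1+q^{2j+1})\, q^{3n^2+6n-2j^2-3j+2} = \sum_{n \geq 1} \sum_{-n/3 \le j \le n/3,\ j\in\mathbb{Z}} q^{n^2+n-6j^2-3j}$ holds. -/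
open Function

def stmt7eL (n j : ℕ) (b : Bool) : ℤ :=
  3 * (n : ℤ) ^ 2 + 6 * n - 2 * (j : ℤ) ^ 2 - 3 * j + 2 + cond b (2 * (j : ℤ) + 1) 0

def stmt7eR (n : ℕ) (k : ℤ) : ℤ :=
  ((n : ℤ) + 1) ^ 2 + ((n : ℤ) + 1) - 6 * k ^ 2 - 3 * k

noncomputable def stmt7FL (q : ℂ) (p : ℕ × ℕ × Bool) : ℂ :=
  if p.2.1 ≤ p.1 then q ^ stmt7eL p.1 p.2.1 p.2.2 else 0

noncomputable def stmt7FR (q : ℂ) (p : ℕ × ℤ) : ℂ :=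
  if -((p.1 : ℤ) + 1) ≤ 3 * p.2 ∧ 3 * p.2 ≤ (p.1 : ℤ) + 1 then q ^ stmt7eR p.1 p.2 else 0

def stmt7map (p : ℕ × ℕ × Bool) : ℕ × ℤ :=
  cond p.2.2
    (if p.2.1 = 0 then (3 * p.1 + 2, (p.1 : ℤ) + 1)
     else (3 * p.1 - 2 * p.2.1 + 1, (p.2.1 : ℤ) - p.1 - 1))
    (3 * p.1 - 2 * p.2.1, (p.1 : ℤ) - p.2.1)

lemma stmt7FL_ne_zero_iff {q : ℂ} (hq : q ≠ 0) (p : ℕ × ℕ × Bool) :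
    stmt7FL q p ≠ 0 ↔ p.2.1 ≤ p.1 := by
  unfold stmt7FL
  split_ifs with h
  · simpa [h] using zpow_ne_zero _ hq
  · simpa using h

lemma stmt7eL_lb (n j : ℕ) (b : Bool) (h : j ≤ n) : (n : ℤ) + j ≤ stmt7eL n j b := by
  have hj : (j : ℤ) ≤ n := by exact_mod_cast h
  have hj0 : (0 : ℤ) ≤ j := Int.ofNat_nonneg j
  have key : (0 : ℤ) ≤ ((n : ℤ) - j) * ((n : ℤ) + j) :=
    mul_nonneg (by linarith) (by linarith)
  cases b <;> simp only [stmt7eL, Bool.cond_false, Bool.cond_true, add_zero] <;> nlinarith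

lemma stmt7eR_lb (n : ℕ) (k : ℤ) (h1 : -((n : ℤ) + 1) ≤ 3 * k) (h2 : 3 * k ≤ (n : ℤ) + 1) :
    (n : ℤ) + |k| ≤ stmt7eR n k := by
  unfold stmt7eR
  rcases le_or_gt 0 k with hk | hk
  · rw [abs_of_nonneg hk]
    have h9 : (3 * k) * (3 * k) ≤ ((n : ℤ) + 1) * ((n : ℤ) + 1) :=
      mul_self_le_mul_self (by linarith) h2
    rcases eq_or_lt_of_le hk with h | h
    · rw [← h]; nlinarith
    · have hk1 : (1 : ℤ) ≤ k := h
      have key : (0 : ℤ) ≤ (3 * k - 1) * (k - 1) :=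
        mul_nonneg (by linarith) (by linarith)
      nlinarith
  · rw [abs_of_neg hk]
    have h9 : (-(3 * k)) * (-(3 * k)) ≤ ((n : ℤ) + 1) * ((n : ℤ) + 1) :=
      mul_self_le_mul_self (by linarith) (by linarith)
    nlinarith [sq_nonneg (k - 1), sq_nonneg k]

lemma stmt7summableFL {q : ℂ} (h0 : 0 < ‖q‖) (h1 : ‖q‖ < 1) :
    Summable (stmt7FL q) := by
  have hq : q ≠ 0 := fun h => by simp [h] at h0
  set r := ‖q‖ with hr
  have hr0 : 0 ≤ r := h0.le
  have hgeo : Summable fun n : ℕ => r ^ n := summable_geometric_of_lt_one hr0 h1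
  have hbool : Summable fun _ : Bool => (1 : ℝ) := Summable.of_finite
  have hinner : Summable fun w : ℕ × Bool => r ^ w.1 * 1 :=
    Summable.mul_of_nonneg (f := fun j : ℕ => r ^ j) (g := fun _ : Bool => (1 : ℝ))
      hgeo hbool (fun n => pow_nonneg hr0 n) (fun _ => zero_le_one)
  have hg : Summable fun p : ℕ × ℕ × Bool => r ^ p.1 * (r ^ p.2.1 * 1) :=
    Summable.mul_of_nonneg (f := fun n : ℕ => r ^ n) (g := fun w : ℕ × Bool => r ^ w.1 * 1)
      hgeo hinner (fun n => pow_nonneg hr0 n)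
      (fun w => mul_nonneg (pow_nonneg hr0 _) zero_le_one)
  refine Summable.of_norm_bounded hg ?_
  rintro ⟨n, j, b⟩
  unfold stmt7FL
  split_ifs with h
  · have hb : ‖q ^ stmt7eL n j b‖ = r ^ stmt7eL n j b := by
      rw [norm_zpow]
    have hle : r ^ stmt7eL n j b ≤ r ^ ((n : ℤ) + j) :=
      zpow_le_zpow_right_of_le_one₀ h0 h1.le (stmt7eL_lb n j b h)
    have heq : r ^ ((n : ℤ) + j) = r ^ n * (r ^ j * 1) := by
      rw [mul_one, ← zpow_natCast r n, ← zpow_natCast r j, ← zpow_add₀ (ne_of_gt h0)]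
    calc ‖q ^ stmt7eL n j b‖ = r ^ stmt7eL n j b := hb
      _ ≤ r ^ ((n : ℤ) + j) := hle
      _ = r ^ n * (r ^ j * 1) := heq
  · simp only [norm_zero]
    exact mul_nonneg (pow_nonneg hr0 _) (mul_nonneg (pow_nonneg hr0 _) zero_le_one)

lemma stmt7summableFR {q : ℂ} (h0 : 0 < ‖q‖) (h1 : ‖q‖ < 1) :
    Summable (stmt7FR q) := by
  set r := ‖q‖ with hr
  have hr0 : 0 ≤ r := h0.le
  have hgeo : Summable fun n : ℕ => r ^ n := summable_geometric_of_lt_one hr0 h1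
  have hint : Summable fun k : ℤ => r ^ k.natAbs := by
    apply Summable.of_nat_of_neg <;> simpa using hgeo
  have hg : Summable fun p : ℕ × ℤ => r ^ p.1 * r ^ p.2.natAbs :=
    Summable.mul_of_nonneg (f := fun n : ℕ => r ^ n) (g := fun k : ℤ => r ^ k.natAbs)
      hgeo hint (fun n => pow_nonneg hr0 n) (fun k => pow_nonneg hr0 _)
  refine Summable.of_norm_bounded hg ?_
  rintro ⟨n, k⟩
  unfold stmt7FR
  split_ifs with h
  · have hb : ‖q ^ stmt7eR n k‖ = r ^ stmt7eR n k := by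
      rw [norm_zpow]
    have hle : r ^ stmt7eR n k ≤ r ^ ((n : ℤ) + |k|) :=
      zpow_le_zpow_right_of_le_one₀ h0 h1.le (stmt7eR_lb n k h.1 h.2)
    have heq : r ^ ((n : ℤ) + |k|) = r ^ n * r ^ k.natAbs := by
      rw [← zpow_natCast r n, ← zpow_natCast r k.natAbs, ← zpow_add₀ (ne_of_gt h0)]
      congr 1
      rw [Int.abs_eq_natAbs]
    calc ‖q ^ stmt7eR n k‖ = r ^ stmt7eR n k := hb
      _ ≤ r ^ ((n : ℤ) + |k|) := hle
      _ = r ^ n * r ^ k.natAbs := heq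
  · simp only [norm_zero]
    exact mul_nonneg (pow_nonneg hr0 _) (pow_nonneg hr0 _)

lemma stmt7bij {q : ℂ} (hq : q ≠ 0) :
    ∑' p : ℕ × ℤ, stmt7FR q p = ∑' p : ℕ × ℕ × Bool, stmt7FL q p := by
  refine tsum_eq_tsum_of_ne_zero_bij (fun x => stmt7map x.1) ?_ ?_ ?_
  · -- injectivity
    rintro ⟨⟨n1, j1, b1⟩, hs1⟩ ⟨⟨n2, j2, b2⟩, hs2⟩ h
    have h1 : j1 ≤ n1 := (stmt7FL_ne_zero_iff hq _).1 hs1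
    have h2 : j2 ≤ n2 := (stmt7FL_ne_zero_iff hq _).1 hs2
    apply Subtype.ext
    simp only at h
    cases b1 <;> cases b2
    · simp only [stmt7map, Bool.cond_false, Prod.mk.injEq] at h
      obtain ⟨ha, hb⟩ := h
      simp only [Prod.mk.injEq, and_true]
      exact ⟨by omega, by omega⟩
    · simp only [stmt7map, Bool.cond_false, Bool.cond_true] at h
      split_ifs at h with hj2 <;>
        (rw [Prod.mk.injEq] at h; obtain ⟨ha, hb⟩ := h; exfalso; omega)
    · simp only [stmt7map, Bool.cond_false, Bool.cond_true] at h
      split_ifs at h with hj1 <;>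
        (rw [Prod.mk.injEq] at h; obtain ⟨ha, hb⟩ := h; exfalso; omega)
    · simp only [stmt7map, Bool.cond_true] at h
      split_ifs at h with hj1 hj2 hj2 <;>
        (rw [Prod.mk.injEq] at h; obtain ⟨ha, hb⟩ := h) <;>
        simp only [Prod.mk.injEq, and_true] <;>
        [exact ⟨by omega, by omega⟩;
         (exfalso; omega);
         (exfalso; omega);
         exact ⟨by omega, by omega⟩]
  · -- surjectivity onto support
    rintro ⟨nn, k⟩ hne
    have hC : -((nn : ℤ) + 1) ≤ 3 * k ∧ 3 * k ≤ (nn : ℤ) + 1 := by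
      by_contra hc
      refine hne ?_
      simp only [stmt7FR]
      rw [if_neg hc]
    by_cases hk1 : 0 ≤ k ∧ 3 * k ≤ (nn : ℤ)
    · refine ⟨⟨(((nn : ℤ) - 2 * k).toNat, ((nn : ℤ) - 3 * k).toNat, false), ?_⟩, ?_⟩
      · refine Function.mem_support.2 ((stmt7FL_ne_zero_iff hq _).2 ?_)
        show ((nn : ℤ) - 3 * k).toNat ≤ ((nn : ℤ) - 2 * k).toNat
        omega
      · simp only [stmt7map, Bool.cond_false, Prod.mk.injEq]
        exact ⟨by omega, by omega⟩
    · by_cases hk2 : 0 ≤ k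
      · have hk3 : 3 * k = (nn : ℤ) + 1 := by omega
        refine ⟨⟨((k - 1).toNat, 0, true), ?_⟩, ?_⟩
        · refine Function.mem_support.2 ((stmt7FL_ne_zero_iff hq _).2 ?_)
          show 0 ≤ (k - 1).toNat
          omega
        · show stmt7map ((k - 1).toNat, 0, true) = (nn, k)
          simp only [stmt7map, Bool.cond_true]
          rw [if_pos trivial, Prod.mk.injEq]
          exact ⟨by omega, by omega⟩
      · have hk4 : k < 0 := by omega
        refine ⟨⟨(((nn : ℤ) + 2 * k + 1).toNat, ((nn : ℤ) + 3 * k + 2).toNat, true), ?_⟩, ?_⟩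
        · refine Function.mem_support.2 ((stmt7FL_ne_zero_iff hq _).2 ?_)
          show ((nn : ℤ) + 3 * k + 2).toNat ≤ ((nn : ℤ) + 2 * k + 1).toNat
          omega
        · have hj : ((nn : ℤ) + 3 * k + 2).toNat ≠ 0 := by omega
          simp only [stmt7map, Bool.cond_true, hj, if_false, Prod.mk.injEq]
          exact ⟨by omega, by omega⟩
  · -- values agree
    rintro ⟨⟨n, j, b⟩, hs⟩
    have hj : j ≤ n := (stmt7FL_ne_zero_iff hq _).1 hs
    simp only
    cases b
    · have hnn : ((3 * n - 2 * j : ℕ) : ℤ) = 3 * (n : ℤ) - 2 * j := by omega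
      simp only [stmt7map, Bool.cond_false, stmt7FR, stmt7FL, stmt7eR, stmt7eL, if_pos hj]
      rw [if_pos (by constructor <;> rw [hnn] <;> omega)]
      simp only [Bool.cond_false, add_zero]
      congr 1
      rw [hnn]
      ring
    · by_cases hj0 : j = 0
      · subst hj0
        simp only [stmt7map, Bool.cond_true, if_pos rfl, stmt7FR, stmt7FL, stmt7eR, stmt7eL,
          if_pos (Nat.zero_le n)]
        rw [if_pos (by constructor <;> push_cast <;> omega)]
        congr 1
        push_cast
        ring
      · have hnn : ((3 * n - 2 * j + 1 : ℕ) : ℤ) = 3 * (n : ℤ) - 2 * j + 1 := by omega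
        simp only [stmt7map, Bool.cond_true, hj0, if_false, stmt7FR, stmt7FL, stmt7eR, stmt7eL,
          if_pos hj]
        rw [if_pos (by constructor <;> rw [hnn] <;> omega)]
        congr 1
        rw [hnn]
        ring

theorem stmt7 (q : ℂ) (h0 : 0 < ‖q‖) (h1 : ‖q‖ < 1) :
    (∑' n : ℕ, ∑ j ∈ Finset.range (n + 1),
        (1 + q ^ (2 * j + 1)) * q ^ (3 * n ^ 2 + 6 * n - 2 * j ^ 2 - 3 * j + 2 : ℤ)) =
      ∑' n : ℕ, ∑ j ∈ (Finset.Icc (-((n : ℤ) + 1)) ((n : ℤ) + 1)).filter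
          (fun j => -((n : ℤ) + 1) ≤ 3 * j ∧ 3 * j ≤ (n : ℤ) + 1),
        q ^ (((n : ℤ) + 1) ^ 2 + ((n : ℤ) + 1) - 6 * j ^ 2 - 3 * j) := by
  have hq : q ≠ 0 := fun h => by simp [h] at h0
  have hFL := stmt7summableFL h0 h1
  have hFR := stmt7summableFR h0 h1
  have innerL : ∀ n : ℕ, (∑ j ∈ Finset.range (n + 1),
      (1 + q ^ (2 * j + 1)) * q ^ (3 * n ^ 2 + 6 * n - 2 * j ^ 2 - 3 * j + 2 : ℤ)) =
      ∑' w : ℕ × Bool, stmt7FL q (n, w) := by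
    intro n
    rw [tsum_eq_sum (s := Finset.range (n + 1) ×ˢ Finset.univ)
      (by
        rintro ⟨j, b⟩ hjb
        simp only [Finset.mem_product, Finset.mem_range, Finset.mem_univ, and_true,
          not_lt] at hjb
        exact if_neg (by simp only; omega))]
    rw [Finset.sum_product]
    refine Finset.sum_congr rfl ?_
    intro j hjmem
    rw [Finset.mem_range] at hjmem
    have hj : j ≤ n := by omega
    rw [Fintype.sum_bool]
    have e0 : stmt7FL q (n, (j, false)) =
        q ^ (3 * (n : ℤ) ^ 2 + 6 * n - 2 * (j : ℤ) ^ 2 - 3 * j + 2) := by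
      show (if j ≤ n then q ^ stmt7eL n j false else 0) = _
      rw [if_pos hj]
      congr 1
      simp [stmt7eL]
    have e1 : stmt7FL q (n, (j, true)) =
        q ^ (3 * (n : ℤ) ^ 2 + 6 * n - 2 * (j : ℤ) ^ 2 - 3 * j + 2) * q ^ (2 * j + 1) := by
      show (if j ≤ n then q ^ stmt7eL n j true else 0) = _
      rw [if_pos hj]
      simp only [stmt7eL, Bool.cond_true]
      rw [zpow_add₀ hq,
        show (2 * (j : ℤ) + 1) = ((2 * j + 1 : ℕ) : ℤ) by push_cast; ring, zpow_natCast]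
    rw [e0, e1]
    ring
  have innerR : ∀ n : ℕ, (∑ j ∈ (Finset.Icc (-((n : ℤ) + 1)) ((n : ℤ) + 1)).filter
      (fun j => -((n : ℤ) + 1) ≤ 3 * j ∧ 3 * j ≤ (n : ℤ) + 1),
      q ^ (((n : ℤ) + 1) ^ 2 + ((n : ℤ) + 1) - 6 * j ^ 2 - 3 * j)) =
      ∑' k : ℤ, stmt7FR q (n, k) := by
    intro n
    rw [tsum_eq_sum (s := (Finset.Icc (-((n : ℤ) + 1)) ((n : ℤ) + 1)).filter
      (fun j => -((n : ℤ) + 1) ≤ 3 * j ∧ 3 * j ≤ (n : ℤ) + 1))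
      (by
        intro k hk
        simp only [Finset.mem_filter, Finset.mem_Icc, not_and, not_le] at hk
        refine if_neg ?_
        simp only
        omega)]
    refine Finset.sum_congr rfl ?_
    intro k hk
    simp only [Finset.mem_filter, Finset.mem_Icc] at hk
    simp only [stmt7FR, if_pos hk.2, stmt7eR]
  calc (∑' n : ℕ, ∑ j ∈ Finset.range (n + 1),
        (1 + q ^ (2 * j + 1)) * q ^ (3 * n ^ 2 + 6 * n - 2 * j ^ 2 - 3 * j + 2 : ℤ))
      = ∑' n : ℕ, ∑' w : ℕ × Bool, stmt7FL q (n, w) := tsum_congr innerL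
    _ = ∑' p : ℕ × ℕ × Bool, stmt7FL q p := (hFL.tsum_prod' hFL.prod_factor).symm
    _ = ∑' p : ℕ × ℤ, stmt7FR q p := (stmt7bij hq).symm
    _ = ∑' n : ℕ, ∑' k : ℤ, stmt7FR q (n, k) := hFR.tsum_prod' hFR.prod_factor
    _ = _ := tsum_congr fun n => (innerR n).symm
end

section
/- Let $m$ be a positive integer and consider solutions $(u,v) \in \mathbb{Z}^2$ to $u^2 - 6v^2 = m$, where two solutions $(u,v)$ and $(u',v')$ are equivalent if $u' + v'\sqrt{6} = \pm(5+2\sqrt{6})^r (u+v\sqrt{6})$ for some $r \in \mathbb{Z}$. Then every equivalence class of solutions contains exactly one solution $(u,v)$ with $u > 0$ and $-u/3 < v \le u/3$. -/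
noncomputable section PellAux

open Zsqrtd

private noncomputable def ι6 : ℤ√6 →+* ℝ := Zsqrtd.toReal (by norm_num)

private lemma S_sq : Real.sqrt 6 ^ 2 = 6 := Real.sq_sqrt (by norm_num)
private lemma S_pos : 0 < Real.sqrt 6 := Real.sqrt_pos.mpr (by norm_num)
private lemma hE1 : 1 < 5 + 2 * Real.sqrt 6 := by nlinarith [S_pos]
private lemma hE0 : (0:ℝ) < 5 + 2 * Real.sqrt 6 := by linarith [hE1]
private lemma hEne : (5 + 2 * Real.sqrt 6) ≠ 0 := ne_of_gt hE0

private lemma iota_apply (a : ℤ√6) : ι6 a = a.re + a.im * Real.sqrt 6 := by simp [ι6]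

private lemma iota_inj : Function.Injective ι6 := by
  apply Zsqrtd.toReal_injective
  intro n h
  have h2 : -3 < n := by nlinarith
  have h3 : n < 3 := by nlinarith
  interval_cases n <;> omega

private lemma add_sqrt6_inj {a b c d : ℤ}
    (h : (a:ℝ) + b * Real.sqrt 6 = c + d * Real.sqrt 6) : a = c ∧ b = d := by
  have h' : ι6 ⟨a, b⟩ = ι6 ⟨c, d⟩ := by rw [iota_apply, iota_apply]; exact h
  have := iota_inj h'
  exact ⟨congrArg Zsqrtd.re this, congrArg Zsqrtd.im this⟩

private def εu : (ℤ√6)ˣ :=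
  ⟨⟨5,2⟩, ⟨5,-2⟩, by ext <;> simp [Zsqrtd.re_mul, Zsqrtd.im_mul],
    by ext <;> simp [Zsqrtd.re_mul, Zsqrtd.im_mul]⟩

private lemma iota_eps_zpow (r : ℤ) :
    ι6 ((εu ^ r : (ℤ√6)ˣ) : ℤ√6) = (5 + 2 * Real.sqrt 6) ^ r := by
  have h1 : ((Units.map (ι6 : ℤ√6 →+* ℝ).toMonoidHom (εu ^ r) : ℝˣ) : ℝ)
      = ι6 ((εu ^ r : (ℤ√6)ˣ) : ℤ√6) := rfl
  rw [← h1, map_zpow, Units.val_zpow_eq_zpow_val]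
  congr 1

private lemma norm_eps_zpow (r : ℤ) : Zsqrtd.norm ((εu ^ r : (ℤ√6)ˣ) : ℤ√6) = 1 := by
  have hpow : ∀ (x : ℤ√6) (n : ℕ), Zsqrtd.norm (x ^ n) = Zsqrtd.norm x ^ n := fun x n =>
    map_pow (Zsqrtd.normMonoidHom) x n
  have he : Zsqrtd.norm ((εu : (ℤ√6)ˣ) : ℤ√6) = 1 := by
    show Zsqrtd.norm (⟨5,2⟩ : ℤ√6) = 1
    simp [Zsqrtd.norm]
  have he' : Zsqrtd.norm ((εu⁻¹ : (ℤ√6)ˣ) : ℤ√6) = 1 := by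
    show Zsqrtd.norm (⟨5,-2⟩ : ℤ√6) = 1
    simp [Zsqrtd.norm]
  obtain ⟨n, hn | hn⟩ := r.eq_nat_or_neg
  · subst hn
    rw [zpow_natCast, Units.val_pow_eq_pow_val, hpow, he, one_pow]
  · subst hn
    rw [zpow_neg, ← inv_zpow, zpow_natCast, Units.val_pow_eq_pow_val, hpow, he', one_pow]

/-- From the integer inequalities to the real interval. -/
private lemma dir2 (m x y : ℤ) (hm : 0 < m) (hnorm : x^2 - 6*y^2 = m)
    (h1 : 0 < x) (h2 : -x < 3*y) (h3 : 3*y ≤ x) :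
    0 < (x:ℝ) + y * Real.sqrt 6 ∧
      (m:ℝ) < (5 + 2*Real.sqrt 6) * ((x:ℝ) + y*Real.sqrt 6)^2 ∧
      ((x:ℝ) + y*Real.sqrt 6)^2 ≤ (m:ℝ) * (5 + 2*Real.sqrt 6) := by
  have hS2 : Real.sqrt 6 ^ 2 = 6 := S_sq
  have hS : 0 < Real.sqrt 6 := S_pos
  set S := Real.sqrt 6
  have hc : (x:ℝ)^2 - 6*(y:ℝ)^2 = m := by exact_mod_cast hnorm
  set α : ℝ := (x:ℝ) + y*S with hα
  set γ : ℝ := (x:ℝ) - y*S with hγ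
  have hm' : α * γ = m := by rw [hα, hγ]; linear_combination hc - (y:ℝ)^2 * hS2
  have hmR : (0:ℝ) < m := by exact_mod_cast hm
  have hr1 : (0:ℝ) < x := by exact_mod_cast h1
  have hr2 : -(x:ℝ) < 3*y := by exact_mod_cast h2
  have hr3 : 3*(y:ℝ) ≤ x := by exact_mod_cast h3
  have id1 : (5+2*S)*α - γ = (4+2*S)*((x:ℝ)+3*y) + 2*(y:ℝ)*(S^2-6) := by
    rw [hα, hγ]; ring
  have id2 : (5+2*S)*γ - α = (4+2*S)*((x:ℝ)-3*y) - 2*(y:ℝ)*(S^2-6) := by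
    rw [hα, hγ]; ring
  have key1 : γ < (5+2*S)*α := by nlinarith [id1, hS2, hS, hr1, hr2]
  have key2 : α ≤ (5+2*S)*γ := by nlinarith [id2, hS2, hS, hr1, hr3]
  have hsum : α + γ = 2*(x:ℝ) := by rw [hα, hγ]; ring
  have hαpos : 0 < α := by
    by_contra h'
    push_neg at h'
    have hγpos : 0 < γ := by nlinarith
    nlinarith [mul_nonpos_of_nonpos_of_nonneg h' hγpos.le]
  refine ⟨hαpos, ?_, ?_⟩
  · nlinarith [mul_lt_mul_of_pos_left key1 hαpos]
  · nlinarith [mul_le_mul_of_nonneg_left key2 hαpos.le]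

/-- From the real interval to the integer inequalities. -/
private lemma dir1 (m x y : ℤ) (hm : 0 < m) (hnorm : x^2 - 6*y^2 = m)
    (hpos : 0 < (x:ℝ) + y * Real.sqrt 6)
    (hlo : (m:ℝ) < (5 + 2*Real.sqrt 6) * ((x:ℝ) + y*Real.sqrt 6)^2)
    (hhi : ((x:ℝ) + y*Real.sqrt 6)^2 ≤ (m:ℝ) * (5 + 2*Real.sqrt 6)) :
    0 < x ∧ -x < 3*y ∧ 3*y ≤ x := by
  have hS2 : Real.sqrt 6 ^ 2 = 6 := S_sq
  have hS : 0 < Real.sqrt 6 := S_pos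
  set S := Real.sqrt 6
  have hc : (x:ℝ)^2 - 6*(y:ℝ)^2 = m := by exact_mod_cast hnorm
  set α : ℝ := (x:ℝ) + y*S with hα
  set γ : ℝ := (x:ℝ) - y*S with hγ
  have hm' : α * γ = m := by rw [hα, hγ]; linear_combination hc - (y:ℝ)^2 * hS2
  have hmR : (0:ℝ) < m := by exact_mod_cast hm
  have key1 : γ < (5+2*S)*α := by nlinarith [hpos, hlo, hm']
  have key2 : α ≤ (5+2*S)*γ := by nlinarith [hpos, hhi, hm']
  have hγpos : 0 < γ := by nlinarith
  have id1 : (5+2*S)*α - γ = (4+2*S)*((x:ℝ)+3*y) + 2*(y:ℝ)*(S^2-6) := by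
    rw [hα, hγ]; ring
  have id2 : (5+2*S)*γ - α = (4+2*S)*((x:ℝ)-3*y) - 2*(y:ℝ)*(S^2-6) := by
    rw [hα, hγ]; ring
  have hx : 0 < (x:ℝ) := by
    have : α + γ = 2*(x:ℝ) := by rw [hα, hγ]; ring
    nlinarith
  have hxy1 : 0 < (x:ℝ) + 3*y := by nlinarith [id1, hS2, hS]
  have hxy2 : 0 ≤ (x:ℝ) - 3*y := by nlinarith [id2, hS2, hS]
  refine ⟨by exact_mod_cast hx, ?_, ?_⟩
  · have : -(x:ℝ) < 3*y := by linarith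
    exact_mod_cast this
  · have : 3*(y:ℝ) ≤ x := by linarith
    exact_mod_cast this

private lemma exists_aux (m : ℤ) (hm : 0 < m) (a₀ : ℤ√6) (hnorm : a₀.norm = m)
    (hpos : 0 < ι6 a₀) :
    ∃ (r : ℤ) (b : ℤ√6), b.norm = m ∧
      ι6 b = (5 + 2*Real.sqrt 6) ^ r * ι6 a₀ ∧
      0 < b.re ∧ -b.re < 3*b.im ∧ 3*b.im ≤ b.re := by
  set E := 5 + 2*Real.sqrt 6 with hE
  set α := ι6 a₀ with hαdef
  have hmR : (0:ℝ) < m := by exact_mod_cast hm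
  have hα2 : 0 < α^2 := pow_pos hpos 2
  have hyE : (1:ℝ) < E^2 := by nlinarith [hE1]
  obtain ⟨r, hr⟩ := exists_mem_Ico_zpow
    (x := (m:ℝ)*E/α^2) (y := E^2) (div_pos (mul_pos hmR hE0) hα2) hyE
  obtain ⟨hrle, hrlt⟩ := hr
  set b : ℤ√6 := ((εu ^ r : (ℤ√6)ˣ) : ℤ√6) * a₀ with hbdef
  have hb_norm : b.norm = m := by
    rw [hbdef, Zsqrtd.norm_mul, norm_eps_zpow, one_mul, hnorm]
  have hb_val : ι6 b = E ^ r * α := by rw [hbdef, map_mul, iota_eps_zpow]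
  have hyr : (E^r)^2 = (E^2)^r := by rw [sq, sq, mul_zpow]
  have hβpos : 0 < ι6 b := by
    rw [hb_val]; exact mul_pos (zpow_pos hE0 r) hpos
  have hhi : (ι6 b)^2 ≤ (m:ℝ) * E := by
    have h1 := (le_div_iff₀ hα2).mp hrle
    rw [hb_val, mul_pow, hyr]
    linarith
  have hlo : (m:ℝ) < E * (ι6 b)^2 := by
    have h2 := (div_lt_iff₀ hα2).mp hrlt
    have hEq : (E^2)^(r+1)*α^2 = (E * (ι6 b)^2) * E := by
      rw [zpow_add₀ (pow_ne_zero 2 hEne), zpow_one, hb_val, mul_pow, hyr]; ring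
    rw [hEq] at h2
    exact lt_of_mul_lt_mul_right h2 hE0.le
  have hnormint : b.re^2 - 6*b.im^2 = m := by
    have h : Zsqrtd.norm b = b.re^2 - 6*b.im^2 := by simp [Zsqrtd.norm]; ring
    rw [← h, hb_norm]
  have hιb : ι6 b = (b.re:ℝ) + b.im * Real.sqrt 6 := iota_apply b
  obtain ⟨hq1, hq2, hq3⟩ := dir1 m b.re b.im hm hnormint
    (by rw [← hιb]; exact hβpos) (by rw [← hιb]; exact hlo) (by rw [← hιb]; exact hhi)
  exact ⟨r, b, hb_norm, hb_val, hq1, hq2, hq3⟩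


end PellAux

/-- Two solutions `(u,v)` and `(u',v')` of the Pell-type equation `u² - 6v² = m` are
equivalent if `u' + v'√6 = ±(5 + 2√6)^r (u + v√6)` for some integer `r`. -/
def PellEquiv (u v u' v' : ℤ) : Prop :=
  ∃ r : ℤ,
    (u' : ℝ) + (v' : ℝ) * Real.sqrt 6 =
        (5 + 2 * Real.sqrt 6) ^ r * ((u : ℝ) + (v : ℝ) * Real.sqrt 6) ∨
    (u' : ℝ) + (v' : ℝ) * Real.sqrt 6 =
        -((5 + 2 * Real.sqrt 6) ^ r * ((u : ℝ) + (v : ℝ) * Real.sqrt 6))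

local notation "E" => (5 + 2 * Real.sqrt 6 : ℝ)

private lemma uniq_aux (m : ℤ) (hm : 0 < m) (u v : ℤ) (huv : u ^ 2 - 6 * v ^ 2 = m)
    (x1 y1 x2 y2 : ℤ)
    (hn1 : x1 ^ 2 - 6 * y1 ^ 2 = m) (he1 : PellEquiv u v x1 y1)
    (hi1 : 0 < x1 ∧ -x1 < 3 * y1 ∧ 3 * y1 ≤ x1)
    (hn2 : x2 ^ 2 - 6 * y2 ^ 2 = m) (he2 : PellEquiv u v x2 y2)
    (hi2 : 0 < x2 ∧ -x2 < 3 * y2 ∧ 3 * y2 ≤ x2) :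
    x1 = x2 ∧ y1 = y2 := by
  obtain ⟨hp1, hlo1, hhi1⟩ := dir2 m x1 y1 hm hn1 hi1.1 hi1.2.1 hi1.2.2
  obtain ⟨hp2, hlo2, hhi2⟩ := dir2 m x2 y2 hm hn2 hi2.1 hi2.2.1 hi2.2.2
  obtain ⟨r1, h1⟩ := he1
  obtain ⟨r2, h2⟩ := he2
  have hc6 : (u:ℝ) ^ 2 - 6 * (v:ℝ) ^ 2 = m := by exact_mod_cast huv
  have hw : ((u:ℝ) + v * Real.sqrt 6) * ((u:ℝ) - v * Real.sqrt 6) = m := by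
    linear_combination hc6 - (v:ℝ) ^ 2 * S_sq
  have hmR : (0:ℝ) < m := by exact_mod_cast hm
  have hwne : (u:ℝ) + v * Real.sqrt 6 ≠ 0 :=
    left_ne_zero_of_mul (by rw [hw]; exact hmR.ne')
  set α1 := (x1:ℝ) + y1 * Real.sqrt 6 with hα1
  set α2 := (x2:ℝ) + y2 * Real.sqrt 6 with hα2
  set w := (u:ℝ) + v * Real.sqrt 6 with hwdef
  set d : ℤ := r1 - r2 with hd
  have hzd : E ^ r1 = E ^ d * E ^ r2 := by
    rw [← zpow_add₀ hEne]
    congr 1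
    omega
  have hcase : α1 = E ^ d * α2 ∨ α1 = -(E ^ d * α2) := by
    rcases h1 with h1 | h1 <;> rcases h2 with h2 | h2
    · left; rw [h1, h2, hzd]; ring
    · right; rw [h1, h2, hzd]; ring
    · right; rw [h1, h2, hzd]; ring
    · left; rw [h1, h2, hzd]; ring
  have hc : α1 = E ^ d * α2 := by
    rcases hcase with hc | hc
    · exact hc
    · exfalso
      nlinarith [zpow_pos hE0 d, mul_pos (zpow_pos hE0 d) hp2]
  have hc2 : α2 = E ^ (-d) * α1 := by
    rw [hc, ← mul_assoc, ← zpow_add₀ hEne]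
    norm_num
  have step : ∀ (a b : ℝ) (e : ℤ), 0 < b → a = E ^ e * b →
      a ^ 2 ≤ (m:ℝ) * E → (m:ℝ) < E * b ^ 2 → e ≤ 0 := by
    intro a b e hb hab hhia hlob
    have hsq : a ^ 2 = E ^ (e + e) * b ^ 2 := by rw [hab, zpow_add₀ hEne]; ring
    have h2' : (m:ℝ) * E < E ^ ((1:ℤ) + 1) * b ^ 2 := by
      rw [zpow_add₀ hEne, zpow_one]
      nlinarith [mul_lt_mul_of_pos_right hlob hE0]
    have h3 : E ^ (e + e) * b ^ 2 < E ^ ((1:ℤ) + 1) * b ^ 2 := by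
      rw [← hsq]; linarith
    have h4 : E ^ (e + e) < E ^ ((1:ℤ) + 1) :=
      (mul_lt_mul_iff_left₀ (pow_pos hb 2)).mp h3
    have h5 := (zpow_lt_zpow_iff_right₀ hE1).mp h4
    omega
  have hd1 := step α1 α2 d hp2 hc hhi1 hlo2
  have hd2 := step α2 α1 (-d) hp1 hc2 hhi2 hlo1
  have hd0 : d = 0 := by omega
  rw [hd0, zpow_zero, one_mul] at hc
  exact add_sqrt6_inj hc

theorem stmt10 (m : ℤ) (hm : 0 < m) (u v : ℤ) (huv : u ^ 2 - 6 * v ^ 2 = m) :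
    ∃! p : ℤ × ℤ, p.1 ^ 2 - 6 * p.2 ^ 2 = m ∧ PellEquiv u v p.1 p.2 ∧
      0 < p.1 ∧ -p.1 < 3 * p.2 ∧ 3 * p.2 ≤ p.1 := by
  classical
  set a : ℤ√6 := ⟨u, v⟩ with ha
  have hna : a.norm = m := by
    have h : a.norm = u ^ 2 - 6 * v ^ 2 := by simp [ha, Zsqrtd.norm]; ring
    rw [h, huv]
  have hconj := congrArg ι6 (Zsqrtd.norm_eq_mul_conj a)
  rw [map_intCast, map_mul] at hconj
  have hmR : (0:ℝ) < m := by exact_mod_cast hm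
  have hane : ι6 a ≠ 0 := by
    intro h
    rw [h, zero_mul, hna] at hconj
    exact hmR.ne' (by exact_mod_cast hconj)
  obtain ⟨a₀, h₀pos, h₀norm, h₀case⟩ :
      ∃ a₀ : ℤ√6, 0 < ι6 a₀ ∧ a₀.norm = m ∧ (ι6 a₀ = ι6 a ∨ ι6 a₀ = -(ι6 a)) := by
    rcases hane.lt_or_gt with h | h
    · exact ⟨-a, by rw [map_neg]; linarith, by rw [Zsqrtd.norm_neg, hna],
        Or.inr (by rw [map_neg])⟩
    · exact ⟨a, h, hna, Or.inl rfl⟩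
  obtain ⟨r, b, hbn, hbv, hq1, hq2, hq3⟩ := exists_aux m hm a₀ h₀norm h₀pos
  have hbnormint : b.re ^ 2 - 6 * b.im ^ 2 = m := by
    have h : Zsqrtd.norm b = b.re ^ 2 - 6 * b.im ^ 2 := by simp [Zsqrtd.norm]; ring
    rw [← h, hbn]
  have hιa : ι6 a = (u:ℝ) + v * Real.sqrt 6 := by rw [iota_apply]
  have hequiv : PellEquiv u v b.re b.im := by
    refine ⟨r, ?_⟩
    have hb : (b.re:ℝ) + b.im * Real.sqrt 6 = ι6 b := (iota_apply b).symm
    rcases h₀case with hc | hc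
    · left; rw [hb, hbv, hc, hιa]
    · right; rw [hb, hbv, hc, hιa]; ring
  refine ⟨(b.re, b.im), ⟨hbnormint, hequiv, hq1, hq2, hq3⟩, ?_⟩
  rintro ⟨x2, y2⟩ ⟨hn2, he2, hi2a, hi2b, hi2c⟩
  have h := uniq_aux m hm u v huv x2 y2 b.re b.im hn2 he2 ⟨hi2a, hi2b, hi2c⟩
    hbnormint hequiv ⟨hq1, hq2, hq3⟩
  simp only [Prod.mk.injEq]
  exact h
end

section
/- For each integer $n \ge 4$, the power series $G_n(q) = \frac{q^{2n}}{(1-q^3)(1-q^{2n-3})(1+q^{2n})}$ has non-negative coefficients. -/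
open Finset

/-- indicator geometric series: sum over m of [s ≤ m ∧ p ∣ m-s] q^m = q^s/(1-q^p). -/
lemma geo_ind (q : ℝ) (hq0 : 0 < q) (hq1 : q < 1) (s p : ℕ) (hp : 1 ≤ p) :
    HasSum (fun m : ℕ => (if s ≤ m ∧ p ∣ (m - s) then (1:ℝ) else 0) * q ^ m)
      (q ^ s / (1 - q ^ p)) := by
  have hqp : q ^ p < 1 := pow_lt_one₀ hq0.le hq1 (by omega)
  have hgeo : HasSum (fun a : ℕ => (q ^ p) ^ a) (1 / (1 - q ^ p)) := by
    simpa [one_div] using hasSum_geometric_of_lt_one (pow_nonneg hq0.le p) hqp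
  have hgeo2 : HasSum (fun a : ℕ => q ^ s * (q ^ p) ^ a) (q ^ s / (1 - q ^ p)) := by
    simpa [div_eq_mul_inv, one_div] using hgeo.mul_left (q ^ s)
  have hginj : Function.Injective (fun a : ℕ => s + p * a) := by
    intro a b hab
    simp only [add_right_inj] at hab
    exact Nat.eq_of_mul_eq_mul_left (by omega) hab
  rw [← hginj.hasSum_iff]
  · refine hgeo2.congr_fun fun a => ?_
    have hcond : s ≤ s + p * a ∧ p ∣ (s + p * a - s) := by
      constructor
      · omega
      · have : s + p * a - s = p * a := by omega
        rw [this]; exact Dvd.intro a rfl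
    show (if s ≤ s + p * a ∧ p ∣ (s + p * a - s) then (1:ℝ) else 0) * q ^ (s + p * a) = q ^ s * (q ^ p) ^ a
    rw [if_pos hcond, one_mul, pow_add, pow_mul]
  · intro m hm
    have : ¬ (s ≤ m ∧ p ∣ (m - s)) := by
      rintro ⟨h1, a, ha⟩
      refine hm ⟨a, ?_⟩
      show s + p * a = m
      omega
    simp [this]

lemma cauchy_prod (q : ℝ) (hq0 : 0 < q) (hq1 : q < 1) (f g : ℕ → ℝ)
    (hf1 : ∀ m, |f m| ≤ 1) (hg1 : ∀ m, |g m| ≤ 1) {a b : ℝ}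
    (hfa : HasSum (fun m => f m * q ^ m) a) (hgb : HasSum (fun m => g m * q ^ m) b) :
    HasSum (fun m => (∑ i ∈ range (m + 1), f i * g (m - i)) * q ^ m) (a * b) := by
  have hqpos : ∀ m : ℕ, (0:ℝ) ≤ q ^ m := fun m => pow_nonneg hq0.le m
  have hgeo : Summable (fun m : ℕ => q ^ m) := summable_geometric_of_lt_one hq0.le hq1
  have hnF : Summable fun m => ‖f m * q ^ m‖ := by
    refine Summable.of_nonneg_of_le (fun m => norm_nonneg _) (fun m => ?_) hgeo
    rw [norm_mul, Real.norm_eq_abs, Real.norm_eq_abs, abs_of_nonneg (hqpos m)]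
    calc |f m| * q ^ m ≤ 1 * q ^ m := by
          exact mul_le_mul_of_nonneg_right (hf1 m) (hqpos m)
      _ = q ^ m := one_mul _
  have hnG : Summable fun m => ‖g m * q ^ m‖ := by
    refine Summable.of_nonneg_of_le (fun m => norm_nonneg _) (fun m => ?_) hgeo
    rw [norm_mul, Real.norm_eq_abs, Real.norm_eq_abs, abs_of_nonneg (hqpos m)]
    calc |g m| * q ^ m ≤ 1 * q ^ m := by
          exact mul_le_mul_of_nonneg_right (hg1 m) (hqpos m)
      _ = q ^ m := one_mul _
  have key := summable_norm_sum_mul_range_of_summable_norm hnF hnG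
  have hsum := key.of_norm
  have hts : (∑' n : ℕ, ∑ k ∈ range (n + 1), (f k * q ^ k) * (g (n - k) * q ^ (n - k)))
      = a * b := by
    rw [← tsum_mul_tsum_eq_tsum_sum_range_of_summable_norm hnF hnG,
      hfa.tsum_eq, hgb.tsum_eq]
  have hfinal := hsum.hasSum
  rw [hts] at hfinal
  refine hfinal.congr_fun fun m => ?_
  rw [Finset.sum_mul]
  refine Finset.sum_congr rfl fun i hi => ?_
  have him : i ≤ m := Nat.lt_succ_iff.mp (mem_range.mp hi)
  have : q ^ i * q ^ (m - i) = q ^ m := by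
    rw [← pow_add]; congr 1; omega
  rw [mul_assoc, mul_comm (g (m - i)) (q ^ m), ← this]
  ring

set_option maxHeartbeats 1000000 in
lemma head_zero (f : ℕ → ℝ)
    (h : ∀ q : ℝ, 0 < q → q < 1 → HasSum (fun m => f m * q ^ m) 0) : f 0 = 0 := by
  have h2 := h (1/2) (by norm_num) (by norm_num)
  have habs : Summable fun m => |f m * (1/2 : ℝ) ^ m| := h2.summable.abs
  set S := ∑' m : ℕ, |f m * (1/2 : ℝ) ^ m| with hS
  have hS0 : 0 ≤ S := tsum_nonneg fun m => abs_nonneg _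
  have hbound : ∀ q : ℝ, 0 < q → q ≤ 1/2 → |f 0| ≤ 2 * q * S := by
    intro q hq0 hq12
    have hq1 : q < 1 := lt_of_le_of_lt hq12 (by norm_num)
    have hq := h q hq0 hq1
    have hshift : HasSum (fun m => f (m + 1) * q ^ (m + 1)) (-(f 0)) := by
      have := (hasSum_nat_add_iff' (f := fun m => f m * q ^ m) 1).mpr hq
      simpa using this
    have htail : Summable fun m => |f (m + 1) * (1/2 : ℝ) ^ (m + 1)| :=
      (summable_nat_add_iff 1).mpr habs
    have term_bound : ∀ m : ℕ,
        ‖f (m + 1) * q ^ (m + 1)‖ ≤ 2 * q * |f (m + 1) * (1/2 : ℝ) ^ (m + 1)| := by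
      intro m
      have e1 : |f (m + 1) * (1/2 : ℝ) ^ (m + 1)| = |f (m + 1)| * (1/2 : ℝ) ^ (m + 1) := by
        rw [abs_mul, abs_pow]; norm_num
      rw [Real.norm_eq_abs, abs_mul, abs_pow, abs_of_nonneg hq0.le, e1]
      have h1 : q ^ m ≤ (1/2 : ℝ) ^ m := pow_le_pow_left₀ hq0.le hq12 m
      rw [pow_succ, pow_succ]
      nlinarith [mul_nonneg (mul_nonneg (abs_nonneg (f (m + 1))) hq0.le)
        (sub_nonneg.mpr h1), abs_nonneg (f (m + 1)), pow_nonneg hq0.le m]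
    have hnorm : Summable fun m => ‖f (m + 1) * q ^ (m + 1)‖ :=
      Summable.of_nonneg_of_le (fun m => norm_nonneg _) term_bound (htail.mul_left (2 * q))
    have h5 : (∑' m : ℕ, |f (m + 1) * (1/2 : ℝ) ^ (m + 1)|) ≤ S := by
      have hh := Summable.sum_add_tsum_nat_add 1 habs
      have h0 : 0 ≤ ∑ i ∈ range 1, |f i * (1/2 : ℝ) ^ i| :=
        Finset.sum_nonneg fun i _ => abs_nonneg _
      rw [hS]; linarith
    calc |f 0| = ‖∑' m : ℕ, f (m + 1) * q ^ (m + 1)‖ := by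
          rw [hshift.tsum_eq, norm_neg, Real.norm_eq_abs]
      _ ≤ ∑' m : ℕ, ‖f (m + 1) * q ^ (m + 1)‖ := norm_tsum_le_tsum_norm hnorm
      _ ≤ ∑' m : ℕ, 2 * q * |f (m + 1) * (1/2 : ℝ) ^ (m + 1)| :=
          Summable.tsum_le_tsum term_bound hnorm (htail.mul_left (2 * q))
      _ = 2 * q * ∑' m : ℕ, |f (m + 1) * (1/2 : ℝ) ^ (m + 1)| := tsum_mul_left
      _ ≤ 2 * q * S := by
          have h2q : (0:ℝ) ≤ 2 * q := by linarith
          exact mul_le_mul_of_nonneg_left h5 h2q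
  by_contra hne
  have hpos : 0 < |f 0| := abs_pos.mpr hne
  have hS4 : (0:ℝ) < 4 * S + 4 := by linarith
  set q := min (1/4 : ℝ) (|f 0| / (4 * S + 4)) with hqdef
  have hq0 : 0 < q := lt_min (by norm_num) (div_pos hpos hS4)
  have hq12 : q ≤ 1/2 := le_trans (min_le_left _ _) (by norm_num)
  have h6 := hbound q hq0 hq12
  have hq2 : q ≤ |f 0| / (4 * S + 4) := min_le_right _ _
  have h7 : q * (4 * S + 4) ≤ |f 0| := by
    have := mul_le_mul_of_nonneg_right hq2 hS4.le
    rwa [div_mul_cancel₀ _ (ne_of_gt hS4)] at this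
  nlinarith [mul_nonneg hq0.le hS0]

lemma all_zero (e : ℕ → ℝ)
    (h : ∀ q : ℝ, 0 < q → q < 1 → HasSum (fun m => e m * q ^ m) 0) :
    ∀ m : ℕ, e m = 0 := by
  have step : ∀ f : ℕ → ℝ, (∀ q : ℝ, 0 < q → q < 1 → HasSum (fun m => f m * q ^ m) 0) →
      ∀ q : ℝ, 0 < q → q < 1 → HasSum (fun m => f (m + 1) * q ^ m) 0 := by
    intro f hf q hq0 hq1
    have hf0 : f 0 = 0 := head_zero f hf
    have hq := hf q hq0 hq1
    have hshift : HasSum (fun m => f (m + 1) * q ^ (m + 1)) 0 := by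
      have := (hasSum_nat_add_iff' (f := fun m => f m * q ^ m) 1).mpr hq
      simpa [hf0] using this
    have h2 := hshift.mul_right q⁻¹
    rw [zero_mul] at h2
    refine h2.congr_fun fun m => ?_
    rw [pow_succ, ← mul_assoc, mul_assoc, mul_inv_cancel₀ (ne_of_gt hq0), mul_one]
  have main : ∀ k : ℕ, ∀ q : ℝ, 0 < q → q < 1 →
      HasSum (fun m => e (m + k) * q ^ m) 0 := by
    intro k
    induction k with
    | zero => simpa using h
    | succ k ih =>
      intro q hq0 hq1
      have := step (fun m => e (m + k)) ih q hq0 hq1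
      refine this.congr_fun fun m => ?_
      congr 2
      omega
  intro m
  have := head_zero (fun j => e (j + m)) (main m)
  simpa using this

theorem stmt13 (n : ℕ) (hn : 4 ≤ n) (c : ℕ → ℝ)
    (h : ∀ q : ℝ, 0 < q → q < 1 →
      HasSum (fun m => c m * q ^ m)
        (q ^ (2 * n) / ((1 - q ^ 3) * (1 - q ^ (2 * n - 3)) * (1 + q ^ (2 * n))))) :
    ∀ m : ℕ, 0 ≤ c m := by
  set k := 2 * n - 3 with hk
  have hk5 : 5 ≤ k := by omega
  have h2n : 2 * n = k + 3 := by omega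
  -- the indicator functions
  set A : ℕ → ℝ := fun m => if k + 3 ≤ m ∧ k ∣ (m - (k + 3)) then 1 else 0 with hA
  set B : ℕ → ℝ := fun m => if 0 ≤ m ∧ (2 * k + 6) ∣ (m - 0) then 1 else 0 with hB
  set C : ℕ → ℝ := fun m => if k + 6 ≤ m ∧ 3 ∣ (m - (k + 6)) then 1 else 0 with hC
  have hAbd : ∀ m, |A m| ≤ 1 := by
    intro m; rw [hA]; dsimp only; split <;> simp
  have hBbd : ∀ m, |B m| ≤ 1 := by
    intro m; rw [hB]; dsimp only; split <;> simp
  have hCbd : ∀ m, |C m| ≤ 1 := by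
    intro m; rw [hC]; dsimp only; split <;> simp
  set d : ℕ → ℝ := fun m =>
    (∑ i ∈ range (m + 1), A i * B (m - i)) + (∑ i ∈ range (m + 1), C i * B (m - i)) with hd
  have hd0 : ∀ m, 0 ≤ d m := by
    intro m
    rw [hd]
    dsimp only
    have hA0 : ∀ j, 0 ≤ A j := by intro j; rw [hA]; dsimp only; split <;> norm_num
    have hB0 : ∀ j, 0 ≤ B j := by intro j; rw [hB]; dsimp only; split <;> norm_num
    have hC0 : ∀ j, 0 ≤ C j := by intro j; rw [hC]; dsimp only; split <;> norm_num
    have s1 : 0 ≤ ∑ i ∈ range (m + 1), A i * B (m - i) :=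
      Finset.sum_nonneg fun i _ => mul_nonneg (hA0 i) (hB0 _)
    have s2 : 0 ≤ ∑ i ∈ range (m + 1), C i * B (m - i) :=
      Finset.sum_nonneg fun i _ => mul_nonneg (hC0 i) (hB0 _)
    linarith
  -- d has the same power series sum as c
  have hdsum : ∀ q : ℝ, 0 < q → q < 1 →
      HasSum (fun m => d m * q ^ m)
        (q ^ (2 * n) / ((1 - q ^ 3) * (1 - q ^ (2 * n - 3)) * (1 + q ^ (2 * n)))) := by
    intro q hq0 hq1
    have hAgeo : HasSum (fun m => A m * q ^ m) (q ^ (k + 3) / (1 - q ^ k)) :=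
      geo_ind q hq0 hq1 (k + 3) k (by omega)
    have hBgeo : HasSum (fun m => B m * q ^ m) (q ^ 0 / (1 - q ^ (2 * k + 6))) :=
      geo_ind q hq0 hq1 0 (2 * k + 6) (by omega)
    have hCgeo : HasSum (fun m => C m * q ^ m) (q ^ (k + 6) / (1 - q ^ 3)) :=
      geo_ind q hq0 hq1 (k + 6) 3 (by omega)
    have h1 := cauchy_prod q hq0 hq1 A B hAbd hBbd hAgeo hBgeo
    have h2 := cauchy_prod q hq0 hq1 C B hCbd hBbd hCgeo hBgeo
    have h3 := h1.add h2
    have h4 : HasSum (fun m => d m * q ^ m)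
        (q ^ (k + 3) / (1 - q ^ k) * (q ^ 0 / (1 - q ^ (2 * k + 6))) +
          q ^ (k + 6) / (1 - q ^ 3) * (q ^ 0 / (1 - q ^ (2 * k + 6)))) := by
      refine h3.congr_fun fun m => ?_
      rw [hd]; dsimp only; rw [add_mul]
    convert h4 using 1
    -- the algebraic identity
    have hq3 : (0:ℝ) < 1 - q ^ 3 := by
      have := pow_lt_one₀ hq0.le hq1 (by norm_num : (3:ℕ) ≠ 0); linarith
    have hqk : (0:ℝ) < 1 - q ^ k := by
      have := pow_lt_one₀ hq0.le hq1 (by omega : k ≠ 0); linarith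
    have hqk3 : (0:ℝ) < 1 - q ^ (k + 3) := by
      have := pow_lt_one₀ hq0.le hq1 (by omega : k + 3 ≠ 0); linarith
    have hqk3' : (0:ℝ) < 1 + q ^ (k + 3) := by
      have := pow_pos hq0 (k + 3); linarith
    have hq2k6 : (1:ℝ) - q ^ (2 * k + 6) ≠ 0 := by
      have := pow_lt_one₀ hq0.le hq1 (by omega : 2 * k + 6 ≠ 0); linarith
    rw [h2n]
    show q ^ (k + 3) / ((1 - q ^ 3) * (1 - q ^ k) * (1 + q ^ (k + 3))) = _
    have hfact : (1:ℝ) - q ^ (2 * k + 6) = (1 - q ^ (k + 3)) * (1 + q ^ (k + 3)) := by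
      ring
    field_simp
    ring
  -- uniqueness
  have hzero : ∀ m, c m - d m = 0 := by
    refine all_zero (fun m => c m - d m) fun q hq0 hq1 => ?_
    have := (h q hq0 hq1).sub (hdsum q hq0 hq1)
    simpa [sub_mul, ← hk] using this
  intro m
  have := hzero m
  have := hd0 m
  linarith [hzero m, hd0 m]
end

section
/- As $q \to 1^-$ along the real axis, $\lim_{q\to 1^-} \sum_{n\geq 0} \frac{q^{2n^2}}{(-q^3;q^2)_n(-q;q^2)_n} = \frac{4}{3}$. -/
open Filter Finset Topology

lemma stmt16_factor (q : ℝ) (hq1 : (0.9:ℝ) < q) (hq2 : q < 1) (j : ℕ) :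
    q ^ (4 * j + 2) / ((1 + q ^ 3 * (q ^ 2) ^ j) * (1 + q * (q ^ 2) ^ j)) ≤ 1 / 3 := by
  have hq0 : (0:ℝ) < q := by linarith
  have hpj : (q ^ 2) ^ j = q ^ (2 * j) := (pow_mul q 2 j).symm
  have hnum : q ^ (4 * j + 2) = (q ^ (2 * j)) ^ 2 * q ^ 2 := by
    rw [← pow_mul, ← pow_add]; congr 1; omega
  rw [hpj, hnum]
  set t := q ^ (2 * j) with ht
  have ht0 : 0 < t := pow_pos hq0 _
  have ht1 : t ≤ 1 := pow_le_one₀ hq0.le hq2.le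
  have hq3 : q ^ 3 ≤ 1 := pow_le_one₀ hq0.le hq2.le
  have hq3' : 0 < q ^ 3 := pow_pos hq0 _
  have h1 : 2 * (q ^ 3 * t) ≤ 1 + q ^ 3 * t := by nlinarith
  have h2 : 2 * (q * t) ≤ 1 + q * t := by nlinarith
  have h3 : (2 * (q ^ 3 * t)) * (2 * (q * t)) ≤ (1 + q ^ 3 * t) * (1 + q * t) :=
    mul_le_mul h1 h2 (by positivity) (by positivity)
  rw [div_le_iff₀ (by positivity)]
  nlinarith [h3, mul_pos ht0 ht0, mul_pos hq0 hq0, mul_pos (mul_pos ht0 ht0) (mul_pos hq0 hq0)]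

lemma stmt16_bound (q : ℝ) (hq1 : (0.9:ℝ) < q) (hq2 : q < 1) (n : ℕ) :
    q ^ (2 * n ^ 2) /
      ((∏ j ∈ Finset.range n, (1 + q ^ 3 * (q ^ 2) ^ j)) *
        ∏ j ∈ Finset.range n, (1 + q * (q ^ 2) ^ j)) ≤ (1 / 3 : ℝ) ^ n := by
  have hq0 : (0:ℝ) < q := by linarith
  have hsum : ∑ j ∈ range n, (4 * j + 2) = 2 * n ^ 2 := by
    induction n with
    | zero => simp
    | succ k ih => rw [Finset.sum_range_succ, ih]; ring
  have hnum : q ^ (2 * n ^ 2) = ∏ j ∈ range n, q ^ (4 * j + 2) := by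
    rw [Finset.prod_pow_eq_pow_sum, hsum]
  rw [hnum, ← Finset.prod_mul_distrib, ← Finset.prod_div_distrib]
  have hle : ∏ j ∈ range n, q ^ (4 * j + 2) / ((1 + q ^ 3 * (q ^ 2) ^ j) * (1 + q * (q ^ 2) ^ j)) ≤
      ∏ _j ∈ range n, (1 / 3 : ℝ) := by
    apply Finset.prod_le_prod
    · intro j _
      have : 0 < (1 + q ^ 3 * (q ^ 2) ^ j) * (1 + q * (q ^ 2) ^ j) := by positivity
      positivity
    · intro j _
      exact stmt16_factor q hq1 hq2 j
  simpa using hle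

theorem stmt16 :
    Filter.Tendsto
      (fun q : ℝ => ∑' n : ℕ, q ^ (2 * n ^ 2) /
        ((∏ j ∈ Finset.range n, (1 + q ^ 3 * (q ^ 2) ^ j)) *
          ∏ j ∈ Finset.range n, (1 + q * (q ^ 2) ^ j)))
      (nhdsWithin 1 (Set.Ioo 0 1)) (nhds (4 / 3)) := by
  have hsum : Summable (fun n : ℕ => (1 / 3 : ℝ) ^ n) :=
    summable_geometric_of_lt_one (by norm_num) (by norm_num)
  have hab : ∀ n : ℕ, Tendsto
      (fun q : ℝ => q ^ (2 * n ^ 2) /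
        ((∏ j ∈ Finset.range n, (1 + q ^ 3 * (q ^ 2) ^ j)) *
          ∏ j ∈ Finset.range n, (1 + q * (q ^ 2) ^ j)))
      (nhdsWithin 1 (Set.Ioo 0 1)) (𝓝 ((1 / 4 : ℝ) ^ n)) := by
    intro n
    have hc : ContinuousAt (fun q : ℝ => q ^ (2 * n ^ 2) /
        ((∏ j ∈ Finset.range n, (1 + q ^ 3 * (q ^ 2) ^ j)) *
          ∏ j ∈ Finset.range n, (1 + q * (q ^ 2) ^ j))) 1 := by
      apply ContinuousAt.div
      · fun_prop
      · fun_prop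
      · simp
    have htend : Tendsto (fun q : ℝ => q ^ (2 * n ^ 2) /
        ((∏ j ∈ Finset.range n, (1 + q ^ 3 * (q ^ 2) ^ j)) *
          ∏ j ∈ Finset.range n, (1 + q * (q ^ 2) ^ j))) (𝓝 1) (𝓝 ((1 / 4 : ℝ) ^ n)) := by
      convert hc.tendsto using 2
      simp [Finset.prod_const, div_pow, ← mul_pow]
      norm_num
    exact htend.mono_left nhdsWithin_le_nhds
  have hbound : ∀ᶠ q in nhdsWithin (1:ℝ) (Set.Ioo 0 1), ∀ n : ℕ,
      ‖q ^ (2 * n ^ 2) /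
        ((∏ j ∈ Finset.range n, (1 + q ^ 3 * (q ^ 2) ^ j)) *
          ∏ j ∈ Finset.range n, (1 + q * (q ^ 2) ^ j))‖ ≤ (1 / 3 : ℝ) ^ n := by
    have h1 : ∀ᶠ q in nhdsWithin (1:ℝ) (Set.Ioo 0 1), (0.9:ℝ) < q :=
      ((eventually_gt_nhds (by norm_num)).filter_mono nhdsWithin_le_nhds)
    have h2 : ∀ᶠ q in nhdsWithin (1:ℝ) (Set.Ioo 0 1), q ∈ Set.Ioo (0:ℝ) 1 :=
      self_mem_nhdsWithin
    filter_upwards [h1, h2] with q hq1 hq2 n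
    have hq0 : (0:ℝ) < q := hq2.1
    have hnn : 0 ≤ q ^ (2 * n ^ 2) /
        ((∏ j ∈ Finset.range n, (1 + q ^ 3 * (q ^ 2) ^ j)) *
          ∏ j ∈ Finset.range n, (1 + q * (q ^ 2) ^ j)) := by
      have : 0 < (∏ j ∈ Finset.range n, (1 + q ^ 3 * (q ^ 2) ^ j)) *
          ∏ j ∈ Finset.range n, (1 + q * (q ^ 2) ^ j) := by positivity
      positivity
    rw [Real.norm_eq_abs, abs_of_nonneg hnn]
    exact stmt16_bound q hq1 hq2.2 n
  have key := tendsto_tsum_of_dominated_convergence hsum hab hbound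
  have : ∑' n : ℕ, (1 / 4 : ℝ) ^ n = 4 / 3 := by
    rw [tsum_geometric_of_lt_one (by norm_num) (by norm_num)]; norm_num
  rwa [this] at key
end
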